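/- Let N ≥ 3, let x_1, …, x_N be pairwise distinct real numbers, let ℓ_j be the Lagrange basis polynomials, and write c^{(m)}_{ij} = ℓ_j^{(m)}(x_i). Then for all 2 ≤ m ≤ N − 1 and all indices i ≠ j, the Shu recurrence holds: c^{(m)}_{ij} = m · ( c^{(m−1)}_{ii} · c^{(1)}_{ij} − c^{(m−1)}_{ij} / (x_i − x_j) ). -/

import Mathlib

open Polynomial Finset

/-- The `j`-th Lagrange basis polynomial `ℓ_j(X) = ∏_{k ≠ j} (X - x_k) / (x_j - x_k)`. -/
noncomputable def lagrangeBasis {N : ℕ} (x : Fin N → ℝ) (j : Fin N) : Polynomial ℝ :=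
  ∏ k ∈ Finset.univ.erase j, Polynomial.C ((x j - x k)⁻¹) * (Polynomial.X - Polynomial.C (x k))

/-- The `m`-th order GDQ weighting coefficient `c^{(m)}_{ij} = ℓ_j^{(m)}(x_i)`. -/
noncomputable def gdqC {N : ℕ} (x : Fin N → ℝ) (m : ℕ) (i j : Fin N) : ℝ :=
  (Polynomial.derivative^[m] (lagrangeBasis x j)).eval (x i)

lemma iter_deriv_linear_mul (a : ℝ) (p : Polynomial ℝ) (n : ℕ) :
    Polynomial.derivative^[n+1] ((X - C a) * p) =
      (X - C a) * Polynomial.derivative^[n+1] p + C ((n : ℝ) + 1) * Polynomial.derivative^[n] p := by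
  induction n with
  | zero =>
    simp [Polynomial.derivative_mul]
    ring
  | succ n ih =>
    rw [Function.iterate_succ_apply', ih, derivative_add, derivative_mul, derivative_mul]
    simp only [Polynomial.derivative_X, Polynomial.derivative_C, Polynomial.derivative_sub,
      sub_zero, one_mul, zero_mul, zero_add, ← Function.iterate_succ_apply']
    push_cast
    simp only [Polynomial.C_add, Polynomial.C_1]
    ring

theorem stmt_2 {N : ℕ} (hN : 3 ≤ N) (x : Fin N → ℝ) (hx : Function.Injective x)
    (m : ℕ) (hm : 2 ≤ m) (hm' : m ≤ N - 1) (i j : Fin N) (hij : i ≠ j) :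
    gdqC x m i j =
      (m : ℝ) * (gdqC x (m - 1) i i * gdqC x 1 i j - gdqC x (m - 1) i j / (x i - x j)) := by
  obtain ⟨n, rfl⟩ : ∃ n, m = n + 1 := ⟨m - 1, (Nat.succ_pred_eq_of_pos (by omega)).symm⟩
  -- Set up notation
  set Nj : Polynomial ℝ := ∏ k ∈ Finset.univ.erase j, (X - C (x k)) with hNj
  set Ni : Polynomial ℝ := ∏ k ∈ Finset.univ.erase i, (X - C (x k)) with hNi
  -- lagrangeBasis as C-mul
  have hlag : ∀ l : Fin N, lagrangeBasis x l =
      C (∏ k ∈ Finset.univ.erase l, (x l - x k)⁻¹) * ∏ k ∈ Finset.univ.erase l, (X - C (x k)) := by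
    intro l
    rw [lagrangeBasis, Finset.prod_mul_distrib, ← map_prod]
  -- gdqC formula
  have hgdq : ∀ (k : ℕ) (l : Fin N), gdqC x k i l =
      (∏ r ∈ Finset.univ.erase l, (x l - x r)⁻¹) *
        (Polynomial.derivative^[k] (∏ r ∈ Finset.univ.erase l, (X - C (x r)))).eval (x i) := by
    intro k l
    rw [gdqC, hlag, Polynomial.iterate_derivative_C_mul, Polynomial.eval_mul, Polynomial.eval_C]
  have hdij : x i - x j ≠ 0 := sub_ne_zero.mpr (fun h => hij (hx h))
  -- nonzero denominators
  have hAj : (∏ r ∈ Finset.univ.erase j, (x j - x r)) ≠ 0 := by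
    apply Finset.prod_ne_zero_iff.mpr
    intro k hk
    exact sub_ne_zero.mpr (fun h => (Finset.mem_erase.mp hk).1 (hx h).symm)
  have hAi : (∏ r ∈ Finset.univ.erase i, (x i - x r)) ≠ 0 := by
    apply Finset.prod_ne_zero_iff.mpr
    intro k hk
    exact sub_ne_zero.mpr (fun h => (Finset.mem_erase.mp hk).1 (hx h).symm)
  -- M = (X - C x_l) * N_l
  set M : Polynomial ℝ := ∏ k : Fin N, (X - C (x k)) with hM
  have hMj : M = (X - C (x j)) * Nj := (Finset.mul_prod_erase _ _ (Finset.mem_univ j)).symm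
  have hMi : M = (X - C (x i)) * Ni := (Finset.mul_prod_erase _ _ (Finset.mem_univ i)).symm
  -- Leibniz at order n+1
  have key1 := congrArg (Polynomial.eval (x i)) (hMj ▸ iter_deriv_linear_mul (x j) Nj n)
  have key2 := congrArg (Polynomial.eval (x i)) (hMi ▸ iter_deriv_linear_mul (x i) Ni n)
  have key3 := congrArg (Polynomial.eval (x i)) (hMj ▸ iter_deriv_linear_mul (x j) Nj 0)
  simp only [Polynomial.eval_add, Polynomial.eval_mul, Polynomial.eval_sub, Polynomial.eval_X,
    Polynomial.eval_C, sub_self, zero_mul, zero_add, Nat.cast_zero, Function.iterate_zero,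
    Function.iterate_one, id_eq, mul_one] at key1 key2 key3
  -- N_j eval at x_i = 0
  have hNjzero : Nj.eval (x i) = 0 := by
    rw [hNj, Polynomial.eval_prod]
    apply Finset.prod_eq_zero (Finset.mem_erase.mpr ⟨hij, Finset.mem_univ i⟩)
    simp
  -- N_i eval x_i as product
  have hNival : Ni.eval (x i) = ∏ r ∈ Finset.univ.erase i, (x i - x r) := by
    rw [hNi, Polynomial.eval_prod]; simp
  have hNjval : Nj.eval (x j) = ∏ r ∈ Finset.univ.erase j, (x j - x r) := by
    rw [hNj, Polynomial.eval_prod]; simp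
  have hinvj : (∏ r ∈ Finset.univ.erase j, (x j - x r)⁻¹) = (Nj.eval (x j))⁻¹ := by
    rw [hNjval, ← Finset.prod_inv_distrib]
  have hinvi : (∏ r ∈ Finset.univ.erase i, (x i - x r)⁻¹) = (Ni.eval (x i))⁻¹ := by
    rw [hNival, ← Finset.prod_inv_distrib]
  rw [hNjzero, mul_zero, add_zero] at key3
  -- key3 : M'.eval xi = (xi - xj) * (D Nj).eval xi
  -- key2 : D^{n+1} M eval = (n+1) * (D^n Ni).eval xi
  -- key1 : D^{n+1} M eval = (xi-xj)*(D^{n+1}Nj).eval + (n+1)*(D^n Nj).eval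
  -- also M'.eval xi = Ni.eval xi:
  have key4 := congrArg (Polynomial.eval (x i)) (hMi ▸ iter_deriv_linear_mul (x i) Ni 0)
  simp only [Polynomial.eval_add, Polynomial.eval_mul, Polynomial.eval_sub, Polynomial.eval_X,
    Polynomial.eval_C, sub_self, zero_mul, zero_add, Nat.cast_zero, mul_one,
    Function.iterate_one, Function.iterate_zero, id] at key4
  -- key4 : M'.eval xi = Ni.eval xi
  have hBN : Ni.eval (x i) ≠ 0 := by rw [hNival]; exact hAi
  have hAN : Nj.eval (x j) ≠ 0 := by rw [hNjval]; exact hAj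
  have hB : Ni.eval (x i) = (x i - x j) * (Polynomial.derivative Nj).eval (x i) := by
    rw [one_mul] at key4; rw [← key4, key3]
  simp only [Nat.add_sub_cancel]
  rw [hgdq (n+1) j, hgdq n i, hgdq 1 j, hgdq n j, hinvj, hinvi, ← hNj, ← hNi]
  rw [Function.iterate_one]
  -- Now pure algebra
  have heq : (x i - x j) * (Polynomial.derivative^[n+1] Nj).eval (x i)
      + ((n:ℝ)+1) * (Polynomial.derivative^[n] Nj).eval (x i)
      = ((n:ℝ)+1) * (Polynomial.derivative^[n] Ni).eval (x i) := by
    rw [← key1, key2]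
  set u := (Polynomial.derivative^[n+1] Nj).eval (x i)
  set v := (Polynomial.derivative^[n] Nj).eval (x i)
  set w := (Polynomial.derivative^[n] Ni).eval (x i)
  set t := (Polynomial.derivative Nj).eval (x i)
  have ht : t ≠ 0 := by
    intro h; rw [h, mul_zero] at hB; exact hBN hB
  push_cast
  rw [hB]
  field_simp
  linear_combination heq
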